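/- arXiv:2012.04376 — 3 statements merged into one kernel-verified Lean document; each statement's English description precedes it below -/
import Mathlib

section
/- Let (A,<_A,f_A) be a partial automorphism of a finite poset and let s ∈ dom(f_A) with s <_A f_A(s). Then there exist a partial automorphism (B,<_B,f_B) of a finite poset extending (A,<_A,f_A), a natural number n, and elements a, b ∈ B with a <_B b, such that f_B^n(s) = a and f_B is free in (a,b). -/
/-- `F` (a partial map identified with its graph) is a partial automorphism of the
strict order `lt`: it is functional, injective, and for all `a, a'` in its domain,
`a < a' ↔ F(a) < F(a')`. -/
def IsPAGraph {α : Type} (lt : α → α → Prop) (F : α → α → Prop) : Prop :=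
  (∀ a b b', F a b → F a b' → b = b') ∧
  (∀ a a' b, F a b → F a' b → a = a') ∧
  (∀ a a' b b', F a b → F a' b' → (lt a a' ↔ lt b b'))

/-- A partial automorphism of a finite poset: a finite carrier, a strict partial
order `lt`, and a partial automorphism `f` (given by its graph). -/
structure PA where
  carrier : Type
  fin : Fintype carrier
  lt : carrier → carrier → Prop
  irrefl : ∀ a, ¬ lt a a
  trans : ∀ a b c, lt a b → lt b c → lt a c
  f : carrier → carrier → Prop
  hf : IsPAGraph lt f

/-- An embedding (extension, up to identification) of partial automorphisms:
an order-embedding of the underlying posets carrying the graph of `f` into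
the graph of `f`. -/
structure PA.Emb (X Y : PA) where
  toFun : X.carrier → Y.carrier
  inj : Function.Injective toFun
  ord : ∀ a a', X.lt a a' ↔ Y.lt (toFun a) (toFun a')
  map_f : ∀ a b, X.f a b → Y.f (toFun a) (toFun b)

/-- The graph of the `n`-th iterate of the partial map with graph `F`:
`iterGraph F n x y` means `F^n(x)` is defined and equals `y`. -/
def iterGraph {α : Type} (F : α → α → Prop) : ℕ → α → α → Prop
  | 0, x, y => x = y
  | (n + 1), x, y => ∃ z, iterGraph F n x z ∧ F z y

/-- `f_B` is free in `(a, b)`, where `a <_B b`: whenever `(B,<_B)` is extended to a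
finite poset `(C,<_C)` (via an order-embedding `e`) and `c₁ <_C ⋯ <_C c_ℓ` is a chain
in `C` with `e a <_C c₁` and `c_ℓ <_C e b`, the partial map
`f_B ∪ {(a,c₁),(c₁,c₂),…,(c_{ℓ-1},c_ℓ)}` is a partial automorphism of `(C,<_C)`. -/
def FreeIn (B : PA) (a b : B.carrier) : Prop :=
  ∀ (C : Type) [Fintype C] (ltC : C → C → Prop),
    (∀ x, ¬ ltC x x) → (∀ x y z, ltC x y → ltC y z → ltC x z) →
    ∀ e : B.carrier → C, Function.Injective e →
      (∀ u v, B.lt u v ↔ ltC (e u) (e v)) →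
    ∀ (ℓ : ℕ), 1 ≤ ℓ → ∀ c : ℕ → C,
      ltC (e a) (c 1) →
      (∀ i, 1 ≤ i → i < ℓ → ltC (c i) (c (i + 1))) →
      ltC (c ℓ) (e b) →
      IsPAGraph ltC (fun x y =>
        (∃ u v, B.f u v ∧ x = e u ∧ y = e v) ∨
        (x = e a ∧ y = c 1) ∨
        (∃ i, 1 ≤ i ∧ i < ℓ ∧ x = c i ∧ y = c (i + 1)))

namespace FreeExt

theorem free_of (B : PA) (a b : B.carrier)
    (haD : ∀ y, ¬ B.f a y) (hbD : ∀ y, ¬ B.f b y)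
    (h4 : ∀ x, B.lt x b ↔ (B.lt x a ∨ x = a))
    (h5 : ∀ x, B.lt a x ↔ (B.lt b x ∨ b = x))
    (h6a : ∀ u v, B.f u v → (B.lt u a ↔ (B.lt v a ∨ v = a)))
    (h6b : ∀ u v, B.f u v → (B.lt a u ↔ (B.lt b v ∨ b = v))) :
    FreeIn B a b := by
  intro C _ ltC irr tr e einj eord ℓ hℓ c h1 hmid hend
  have asymm : ∀ x y, ltC x y → ¬ ltC y x := fun x y h h' => irr x (tr x y x h h')
  have asymmB : ∀ x y, B.lt x y → ¬ B.lt y x := fun x y h h' => B.irrefl x (B.trans x y x h h')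
  have hcc : ∀ j i, 1 ≤ i → i < j → j ≤ ℓ → ltC (c i) (c j) := by
    intro j
    induction j with
    | zero => intro i _ h _; omega
    | succ j ih =>
      intro i hi hij hj
      rcases Nat.lt_or_ge i j with h | h
      · exact tr _ _ _ (ih i hi h (by omega)) (hmid j (by omega) (by omega))
      · have : i = j := by omega
        subst this
        exact hmid i hi (by omega)
  have hcb : ∀ i, 1 ≤ i → i ≤ ℓ → ltC (c i) (e b) := by
    intro i hi hil
    rcases Nat.lt_or_ge i ℓ with h | h
    · exact tr _ _ _ (hcc ℓ i hi h le_rfl) hend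
    · have : i = ℓ := by omega
      subst this; exact hend
  have hac : ∀ i, 1 ≤ i → i ≤ ℓ → ltC (e a) (c i) := by
    intro i hi hil
    rcases Nat.lt_or_ge 1 i with h | h
    · exact tr _ _ _ h1 (hcc i 1 le_rfl h hil)
    · have : i = 1 := by omega
      subst this; exact h1
  have X : ∀ w i, 1 ≤ i → i ≤ ℓ → (ltC (e w) (c i) ↔ (B.lt w a ∨ w = a)) := by
    intro w i hi hil
    constructor
    · intro h
      exact (h4 w).mp ((eord w b).mpr (tr _ _ _ h (hcb i hi hil)))
    · rintro (h | rfl)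
      · exact tr _ _ _ ((eord w a).mp h) (hac i hi hil)
      · exact hac i hi hil
  have Y : ∀ w i, 1 ≤ i → i ≤ ℓ → (ltC (c i) (e w) ↔ (B.lt b w ∨ b = w)) := by
    intro w i hi hil
    constructor
    · intro h
      exact (h5 w).mp ((eord a w).mpr (tr _ _ _ (hac i hi hil) h))
    · rintro (h | rfl)
      · exact tr _ _ _ (hcb i hi hil) ((eord b w).mp h)
      · exact hcb i hi hil
  have Zne : ∀ w i, 1 ≤ i → i ≤ ℓ → e w ≠ c i := by
    intro w i hi hil h
    have h1' : B.lt a w := (eord a w).mpr (by rw [h]; exact hac i hi hil)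
    have h2' : B.lt w b := (eord w b).mpr (by rw [h]; exact hcb i hi hil)
    rcases (h5 w).mp h1' with hb | rfl
    · exact asymmB _ _ hb h2'
    · exact B.irrefl _ h2'
  refine ⟨?_, ?_, ?_⟩
  · -- functional
    rintro x y y'
      (⟨u, v, huv, rfl, rfl⟩ | ⟨rfl, rfl⟩ | ⟨i, hi, hil, rfl, rfl⟩)
      (⟨u', v', huv', hx, rfl⟩ | ⟨hx, rfl⟩ | ⟨j, hj, hjl, hx, rfl⟩)
    · cases einj hx; rw [B.hf.1 u v v' huv huv']
    · cases einj hx; exact absurd huv (haD v)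
    · exact absurd hx (Zne u j hj (le_of_lt hjl))
    · cases einj hx; exact absurd huv' (haD v')
    · rfl
    · exact absurd hx (Zne a j hj (le_of_lt hjl))
    · exact absurd hx.symm (Zne u' i hi (le_of_lt hil))
    · exact absurd hx.symm (Zne a i hi (le_of_lt hil))
    · have hij : i = j := by
        by_contra hne
        rcases Nat.lt_trichotomy i j with h | h | h
        · have := hcc j i hi h (le_of_lt hjl); rw [hx] at this; exact irr _ this
        · exact hne h
        · have := hcc i j hj h (le_of_lt hil); rw [← hx] at this; exact irr _ this
      subst hij; rfl
  · -- injective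
    rintro x x' y
      (⟨u, v, huv, rfl, rfl⟩ | ⟨rfl, rfl⟩ | ⟨i, hi, hil, rfl, rfl⟩)
      (⟨u', v', huv', rfl, hy⟩ | ⟨rfl, hy⟩ | ⟨j, hj, hjl, rfl, hy⟩)
    · cases einj hy; rw [B.hf.2.1 u u' v huv huv']
    · exact absurd hy (Zne v 1 le_rfl hℓ)
    · exact absurd hy (Zne v (j+1) (by omega) (by omega))
    · exact absurd hy.symm (Zne v' 1 le_rfl hℓ)
    · rfl
    · have := hcc (j+1) 1 le_rfl (by omega) (by omega)
      rw [← hy] at this; exact absurd this (irr _)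
    · exact absurd hy.symm (Zne v' (i+1) (by omega) (by omega))
    · have := hcc (i+1) 1 le_rfl (by omega) (by omega)
      rw [hy] at this; exact absurd this (irr _)
    · have hij : i = j := by
        by_contra hne
        rcases Nat.lt_trichotomy i j with h | h | h
        · have := hcc (j+1) (i+1) (by omega) (by omega) (by omega)
          rw [hy] at this; exact irr _ this
        · exact hne h
        · have := hcc (i+1) (j+1) (by omega) (by omega) (by omega)
          rw [← hy] at this; exact irr _ this
      subst hij; rfl
  · -- order preserving
    rintro x x' y y'
      (⟨u, v, huv, rfl, rfl⟩ | ⟨rfl, rfl⟩ | ⟨i, hi, hil, rfl, rfl⟩)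
      (⟨u', v', huv', rfl, rfl⟩ | ⟨rfl, rfl⟩ | ⟨j, hj, hjl, rfl, rfl⟩)
    · rw [← eord, ← eord]; exact B.hf.2.2 u u' v v' huv huv'
    · rw [X v 1 le_rfl hℓ, ← eord]; exact h6a u v huv
    · rw [X u j hj (le_of_lt hjl), X v (j+1) (by omega) (by omega)]
      constructor
      · rintro (h | rfl)
        · exact (h6a u v huv).mp h
        · exact absurd huv (haD v)
      · intro h
        exact Or.inl ((h6a u v huv).mpr h)
    · rw [Y v' 1 le_rfl hℓ, ← eord]; exact h6b u' v' huv'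
    · exact iff_of_false (irr _) (irr _)
    · exact iff_of_true (hac j hj (le_of_lt hjl))
        (hcc (j+1) 1 le_rfl (by omega) (by omega))
    · rw [Y u' i hi (le_of_lt hil), Y v' (i+1) (by omega) (by omega), ← h5 u']
      exact h6b u' v' huv'
    · exact iff_of_false (asymm _ _ (hac i hi (le_of_lt hil)))
        (asymm _ _ (hcc (i+1) 1 le_rfl (by omega) (by omega)))
    · rcases Nat.lt_trichotomy i j with h | h | h
      · exact iff_of_true (hcc j i hi h (le_of_lt hjl))
          (hcc (j+1) (i+1) (by omega) (by omega) (by omega))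
      · subst h; exact iff_of_false (irr _) (irr _)
      · exact iff_of_false (asymm _ _ (hcc i j hj h (le_of_lt hil)))
          (asymm _ _ (hcc (i+1) (j+1) (by omega) (by omega) (by omega)))

end FreeExt

namespace FreeExt

section Constr

variable {α : Type}

/-- one step of the `S`-recursion: add the down-closure of the image of the domain part. -/
def SStep (lt f : α → α → Prop) (X : Set α) : Set α :=
  X ∪ {x | ∃ u v, f u v ∧ u ∈ X ∧ (lt x v ∨ x = v)}

def TStep (lt f : α → α → Prop) (X : Set α) : Set α :=
  {x | ∃ u v, f u v ∧ u ∈ X ∧ (lt v x ∨ v = x)}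

def Sset (lt f : α → α → Prop) (a0 : α) : ℕ → Set α
  | 0 => {x | lt x a0}
  | (m+1) => SStep lt f (Sset lt f a0 m)

def Tset (lt f : α → α → Prop) (a0 : α) : ℕ → Set α
  | 0 => {x | lt a0 x}
  | (m+1) => TStep lt f (Tset lt f a0 m)

variable {lt f : α → α → Prop} {a0 o : α}

lemma Sdc (htr : ∀ x y z, lt x y → lt y z → lt x z) :
    ∀ m x y, lt x y → y ∈ Sset lt f a0 m → x ∈ Sset lt f a0 m := by
  intro m
  induction m with
  | zero => intro x y hxy hy; exact htr _ _ _ hxy hy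
  | succ m ih =>
    rintro x y hxy (hy | ⟨u, v, huv, hu, hyv⟩)
    · exact Or.inl (ih x y hxy hy)
    · refine Or.inr ⟨u, v, huv, hu, Or.inl ?_⟩
      rcases hyv with h | rfl
      · exact htr _ _ _ hxy h
      · exact hxy

lemma Tuc (htr : ∀ x y z, lt x y → lt y z → lt x z) :
    ∀ m x y, lt x y → x ∈ Tset lt f a0 m → y ∈ Tset lt f a0 m := by
  intro m
  induction m with
  | zero => intro x y hxy hx; exact htr _ _ _ hx hxy
  | succ m _ =>
    rintro x y hxy ⟨u, v, huv, hu, hvx⟩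
    refine ⟨u, v, huv, hu, Or.inl ?_⟩
    rcases hvx with h | rfl
    · exact htr _ _ _ h hxy
    · exact hxy

lemma Smono : ∀ {m m' : ℕ}, m ≤ m' → Sset lt f a0 m ⊆ Sset lt f a0 m' := by
  intro m m' h
  induction m' with
  | zero => have : m = 0 := by omega
            subst this; exact fun _ h => h
  | succ m' ih =>
    rcases Nat.lt_or_ge m (m'+1) with h' | h'
    · exact fun x hx => Or.inl (ih (by omega) hx)
    · have : m = m' + 1 := by omega
      subst this; exact fun _ h => h

lemma Tanti (htr : ∀ x y z, lt x y → lt y z → lt x z)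
    (hpa : IsPAGraph lt f) (ho : f o a0) (hoa : lt o a0) :
    ∀ m, Tset lt f a0 (m+1) ⊆ Tset lt f a0 m := by
  intro m
  induction m with
  | zero =>
    rintro x ⟨u, v, huv, hu, hvx⟩
    have h1 : lt o u := htr _ _ _ hoa hu
    have h2 : lt a0 v := (hpa.2.2 o u a0 v ho huv).mp h1
    rcases hvx with h | rfl
    · exact htr _ _ _ h2 h
    · exact h2
  | succ m ih =>
    rintro x ⟨u, v, huv, hu, hvx⟩
    exact ⟨u, v, huv, ih hu, hvx⟩

lemma Tanti' (htr : ∀ x y z, lt x y → lt y z → lt x z)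
    (hpa : IsPAGraph lt f) (ho : f o a0) (hoa : lt o a0) :
    ∀ {m m' : ℕ}, m ≤ m' → Tset lt f a0 m' ⊆ Tset lt f a0 m := by
  intro m m' h
  induction m' with
  | zero => have : m = 0 := by omega
            subst this; exact fun _ h => h
  | succ m' ih =>
    rcases Nat.lt_or_ge m (m'+1) with h' | h'
    · exact fun x hx => ih (by omega) (Tanti htr hpa ho hoa m' hx)
    · have : m = m' + 1 := by omega
      subst this; exact fun _ h => h

lemma SmemA (ho : f o a0) (hoa : lt o a0) :
    ∀ m, a0 ∈ Sset lt f a0 (m+1) := by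
  intro m
  have h1 : a0 ∈ Sset lt f a0 1 := Or.inr ⟨o, a0, ho, hoa, Or.inr rfl⟩
  exact Smono (by omega) h1

lemma ST (htr : ∀ x y z, lt x y → lt y z → lt x z)
    (hpa : IsPAGraph lt f) (ho : f o a0) (hoa : lt o a0) :
    ∀ m x y, x ∈ Sset lt f a0 m → y ∈ Tset lt f a0 m → lt x y := by
  intro m
  induction m with
  | zero => intro x y hx hy; exact htr _ _ _ hx hy
  | succ m ih =>
    rintro x y (hx | ⟨u, v, huv, hu, hxv⟩) hy
    · exact ih x y hx (Tanti htr hpa ho hoa m hy)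
    · obtain ⟨w, z, hwz, hw, hzy⟩ := hy
      have h1 : lt u w := ih u w hu hw
      have h2 : lt v z := (hpa.2.2 u w v z huv hwz).mp h1
      have h3 : lt x z := by
        rcases hxv with h | rfl
        · exact htr _ _ _ h h2
        · exact h2
      rcases hzy with h | rfl
      · exact htr _ _ _ h3 h
      · exact h3

lemma SX (htr : ∀ x y z, lt x y → lt y z → lt x z)
    (hpa : IsPAGraph lt f) (ho : f o a0) (hoa : lt o a0) :
    ∀ m u v, f u v → (v ∈ Sset lt f a0 (m+1) ↔ u ∈ Sset lt f a0 m) := by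
  intro m
  induction m with
  | zero =>
    intro u v huv
    constructor
    · rintro (hv | ⟨u1, v1, hu1v1, hu1, hvv1⟩)
      · have h1 : lt u o := (hpa.2.2 u o v a0 huv ho).mpr hv
        exact htr _ _ _ h1 hoa
      · rcases hvv1 with h | rfl
        · have h1 : lt u u1 := (hpa.2.2 u u1 v v1 huv hu1v1).mpr h
          exact htr _ _ _ h1 hu1
        · have h1 : u = u1 := hpa.2.1 u u1 v huv hu1v1
          rw [h1]; exact hu1
    · intro hu
      exact Or.inr ⟨u, v, huv, hu, Or.inr rfl⟩
  | succ m ih =>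
    intro u v huv
    constructor
    · rintro (hv | ⟨u1, v1, hu1v1, hu1, hvv1⟩)
      · exact Smono (by omega) ((ih u v huv).mp hv)
      · rcases hvv1 with h | rfl
        · have h1 : lt u u1 := (hpa.2.2 u u1 v v1 huv hu1v1).mpr h
          exact Sdc htr (m+1) u u1 h1 hu1
        · have h1 : u = u1 := hpa.2.1 u u1 v huv hu1v1
          rw [h1]; exact hu1
    · intro hu
      exact Or.inr ⟨u, v, huv, hu, Or.inr rfl⟩

lemma TX (htr : ∀ x y z, lt x y → lt y z → lt x z)
    (hpa : IsPAGraph lt f) :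
    ∀ m u v, f u v → (v ∈ Tset lt f a0 (m+1) ↔ u ∈ Tset lt f a0 m) := by
  intro m u v huv
  constructor
  · rintro ⟨u1, v1, hu1v1, hu1, hv1v⟩
    rcases hv1v with h | rfl
    · have h1 : lt u1 u := (hpa.2.2 u1 u v1 v hu1v1 huv).mpr h
      exact Tuc htr m u1 u h1 hu1
    · have h1 : u1 = u := hpa.2.1 u1 u _ hu1v1 huv
      rw [← h1]; exact hu1
  · intro hu
    exact ⟨u, v, huv, hu, Or.inr rfl⟩

lemma stab_forever (g : ℕ → Set α) (F : Set α → Set α)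
    (hrec : ∀ m, g (m+1) = F (g m)) (m : ℕ) (h : g (m+1) = g m) :
    ∀ j, m ≤ j → g j = g m := by
  intro j hj
  induction j with
  | zero => have : m = 0 := by omega
            rw [this]
  | succ j ih =>
    rcases Nat.lt_or_ge m (j+1) with h' | h'
    · have hmj : m ≤ j := by omega
      rw [hrec j, ih hmj, ← hrec m, h]
    · have : m = j+1 := by omega
      rw [this]

lemma exists_repeat_mono [Fintype α] (g : ℕ → Set α)
    (mono : ∀ m, g m ⊆ g (m+1)) :
    ∃ m, m ≤ Fintype.card α ∧ g (m+1) = g m := by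
  by_contra hcon
  push_neg at hcon
  have key : ∀ m, m ≤ Fintype.card α + 1 → m ≤ (g m).ncard := by
    intro m
    induction m with
    | zero => intro _; exact Nat.zero_le _
    | succ m ih =>
      intro hm
      have h1 : g m ⊂ g (m+1) :=
        ⟨mono m, fun hsub => hcon m (by omega) (Set.Subset.antisymm hsub (mono m))⟩
      have h2 : (g m).ncard < (g (m+1)).ncard := Set.ncard_lt_ncard h1 (Set.toFinite _)
      have := ih (by omega)
      omega
  have h1 := key (Fintype.card α + 1) le_rfl
  have h2 : (g (Fintype.card α + 1)).ncard ≤ Fintype.card α := by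
    have := Set.ncard_le_ncard (Set.subset_univ (g (Fintype.card α + 1))) (Set.toFinite _)
    simpa [Set.ncard_univ, Nat.card_eq_fintype_card] using this
  omega

lemma exists_repeat_anti [Fintype α] (g : ℕ → Set α)
    (anti : ∀ m, g (m+1) ⊆ g m) :
    ∃ m, m ≤ Fintype.card α ∧ g (m+1) = g m := by
  obtain ⟨m, hm, h⟩ :=
    exists_repeat_mono (fun m => (g m)ᶜ) (fun m => Set.compl_subset_compl.mpr (anti m))
  exact ⟨m, hm, by simpa [compl_inj_iff] using h⟩

end Constr

end FreeExt

namespace FreeExt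

section Orbit

variable {α : Type} {lt f : α → α → Prop}

lemma iter_fun (hfun : ∀ a b b', f a b → f a b' → b = b') :
    ∀ m (x y y' : α), iterGraph f m x y → iterGraph f m x y' → y = y' := by
  intro m
  induction m with
  | zero => intro x y y' h h'; exact h.symm.trans h'
  | succ m ih =>
    rintro x y y' ⟨z, hz, hzy⟩ ⟨z', hz', hzy'⟩
    cases ih x z z' hz hz'
    exact hfun z y y' hzy hzy'

lemma iter_lt (hpa : IsPAGraph lt f) {s t : α} (hst : f s t) (hlt : lt s t) :
    ∀ m (y z : α), iterGraph f m s y → f y z → lt y z := by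
  intro m
  induction m with
  | zero =>
    intro y z hy hyz
    cases hy
    have h1 : z = t := hpa.1 s z t hyz hst
    rw [h1]; exact hlt
  | succ m ih =>
    rintro y z ⟨w, hw, hwy⟩ hyz
    exact (hpa.2.2 w y y z hwy hyz).mp (ih w y hw hwy)

lemma orbit_top [Fintype α]
    (hirr : ∀ x, ¬ lt x x) (htr : ∀ x y z, lt x y → lt y z → lt x z)
    (hpa : IsPAGraph lt f) (s t : α) (hst : f s t) (hlt : lt s t) :
    ∃ n o a0, iterGraph f n s o ∧ f o a0 ∧ lt o a0 ∧ (∀ y, ¬ f a0 y) := by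
  classical
  have hnotall : ¬ ∀ m, ∃ y, iterGraph f m s y := by
    intro hall
    choose g hg using hall
    have hstep : ∀ m, lt (g m) (g (m+1)) := by
      intro m
      obtain ⟨z, hz, hzg⟩ := hg (m+1)
      have hzz : z = g m := iter_fun hpa.1 m s z (g m) hz (hg m)
      subst hzz
      exact iter_lt hpa hst hlt m _ (g (m+1)) hz hzg
    have hmono : ∀ i j, i < j → lt (g i) (g j) := by
      intro i j hij
      induction j with
      | zero => omega
      | succ j ih =>
        rcases Nat.lt_or_ge i j with h | h
        · exact htr _ _ _ (ih h) (hstep j)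
        · have : i = j := by omega
          subst this; exact hstep i
    have hinj : Function.Injective g := by
      intro i j h
      by_contra hne
      rcases Nat.lt_trichotomy i j with h' | h' | h'
      · have := hmono i j h'; rw [h] at this; exact hirr _ this
      · exact hne h'
      · have := hmono j i h'; rw [h] at this; exact hirr _ this
    obtain ⟨i, j, hne, heq⟩ := Finite.exists_ne_map_eq_of_infinite g
    exact hne (hinj heq)
  push_neg at hnotall
  obtain ⟨m1, hm1⟩ := hnotall
  have hex : ∃ m, ∀ y, ¬ iterGraph f m s y := ⟨m1, hm1⟩
  have hm0 : ∀ y, ¬ iterGraph f (Nat.find hex) s y := Nat.find_spec hex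
  have hmin : ∀ k, k < Nat.find hex → ∃ y, iterGraph f k s y := by
    intro k hk
    have := Nat.find_min hex hk
    push_neg at this; exact this
  have h2le : 2 ≤ Nat.find hex := by
    rcases Nat.lt_or_ge (Nat.find hex) 2 with h | h
    · exfalso
      rcases (by omega : Nat.find hex = 0 ∨ Nat.find hex = 1) with h0 | h0
      · rw [h0] at hm0; exact hm0 s (show iterGraph f 0 s s from rfl)
      · rw [h0] at hm0
        exact hm0 t ⟨s, rfl, hst⟩
    · exact h
  obtain ⟨a0, ha0⟩ := hmin (Nat.find hex - 1) (by omega)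
  have hsucc : Nat.find hex - 1 = (Nat.find hex - 2) + 1 := by omega
  have ha0' := ha0
  rw [hsucc] at ha0'
  obtain ⟨o, ho', hoo⟩ := ha0'
  refine ⟨Nat.find hex - 2, o, a0, ho', hoo,
    iter_lt hpa hst hlt _ o a0 ho' hoo, ?_⟩
  intro y hy
  have hbig : iterGraph f ((Nat.find hex - 1) + 1) s y := ⟨a0, ha0, hy⟩
  rw [(by omega : (Nat.find hex - 1) + 1 = Nat.find hex)] at hbig
  exact hm0 y hbig

end Orbit

section Build

variable {α : Type}

def ltB (lt f : α → α → Prop) (a0 : α) (K : ℕ) :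
    (α ⊕ Fin (K+1)) → (α ⊕ Fin (K+1)) → Prop
  | Sum.inl x, Sum.inl y => lt x y
  | Sum.inl x, Sum.inr j => x ∈ Sset lt f a0 ((j:ℕ)+1)
  | Sum.inr i, Sum.inl y => y ∈ Tset lt f a0 ((i:ℕ)+1)
  | Sum.inr i, Sum.inr j => (i:ℕ) < (j:ℕ)

def FB (f : α → α → Prop) (a0 : α) (K : ℕ) (X Y : α ⊕ Fin (K+1)) : Prop :=
  (∃ u v, f u v ∧ X = Sum.inl u ∧ Y = Sum.inl v) ∨
  (X = Sum.inl a0 ∧ Y = Sum.inr ⟨0, by omega⟩) ∨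
  (∃ i j : Fin (K+1), (i:ℕ)+1 = (j:ℕ) ∧ (j:ℕ) < K ∧ X = Sum.inr i ∧ Y = Sum.inr j)

variable {lt f : α → α → Prop} {a0 o : α}

lemma ltB_irrefl (hirr : ∀ x, ¬ lt x x) (K : ℕ) :
    ∀ X, ¬ ltB lt f a0 K X X := by
  rintro (x | i) h
  · exact hirr x h
  · exact absurd h (lt_irrefl _)

lemma ltB_trans (hirr : ∀ x, ¬ lt x x) (htr : ∀ x y z, lt x y → lt y z → lt x z)
    (hpa : IsPAGraph lt f) (ho : f o a0) (hoa : lt o a0) (K : ℕ) :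
    ∀ X Y Z, ltB lt f a0 K X Y → ltB lt f a0 K Y Z → ltB lt f a0 K X Z := by
  rintro (x | i) (y | j) (z | l) hxy hyz
  · exact htr _ _ _ hxy hyz
  · exact Sdc htr _ x y hxy hyz
  · exact ST htr hpa ho hoa _ x z hxy hyz
  · have h1 : (j:ℕ) < (l:ℕ) := hyz
    exact Smono (by omega : (j:ℕ)+1 ≤ (l:ℕ)+1) hxy
  · exact Tuc htr _ y z hyz hxy
  · show (i:ℕ) < (l:ℕ)
    by_contra hcon
    have hxy' : y ∈ Tset lt f a0 ((i:ℕ)+1) := hxy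
    have hyz' : y ∈ Sset lt f a0 ((l:ℕ)+1) := hyz
    have h1 : y ∈ Sset lt f a0 ((i:ℕ)+1) := Smono (by omega : (l:ℕ)+1 ≤ (i:ℕ)+1) hyz'
    exact hirr y (ST htr hpa ho hoa _ y y h1 hxy')
  · have h1 : (i:ℕ) < (j:ℕ) := hxy
    exact Tanti' htr hpa ho hoa (by omega : (i:ℕ)+1 ≤ (j:ℕ)+1) hyz
  · have h1 : (i:ℕ) < (j:ℕ) := hxy
    have h2 : (j:ℕ) < (l:ℕ) := hyz
    show (i:ℕ) < (l:ℕ)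
    omega

end Build

end FreeExt

namespace FreeExt

section Build2

variable {α : Type} {lt f : α → α → Prop} {a0 o : α}

lemma hfB (K : ℕ)
    (hirr : ∀ x, ¬ lt x x) (htr : ∀ x y z, lt x y → lt y z → lt x z)
    (hpa : IsPAGraph lt f) (ho : f o a0) (hoa : lt o a0) (haD : ∀ y, ¬ f a0 y) :
    IsPAGraph (ltB lt f a0 K) (FB f a0 K) := by
  refine ⟨?_, ?_, ?_⟩
  · -- functional
    rintro X Y Y'
      (⟨u, v, huv, rfl, rfl⟩ | ⟨rfl, rfl⟩ | ⟨i, j, hij, hjK, rfl, rfl⟩)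
      (⟨u', v', huv', hx, rfl⟩ | ⟨hx, rfl⟩ | ⟨i', j', hij', hj'K, hx, rfl⟩)
    · injection hx with h; subst h; rw [hpa.1 u v v' huv huv']
    · injection hx with h; subst h; exact absurd huv (haD v)
    · simp at hx
    · injection hx with h; subst h; exact absurd huv' (haD v')
    · rfl
    · simp at hx
    · simp at hx
    · simp at hx
    · injection hx with h; subst h
      have : (j:ℕ) = (j':ℕ) := by omega
      exact congrArg Sum.inr (Fin.ext this)
  · -- injective
    rintro X X' Y
      (⟨u, v, huv, rfl, rfl⟩ | ⟨rfl, rfl⟩ | ⟨i, j, hij, hjK, rfl, rfl⟩)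
      (⟨u', v', huv', rfl, hy⟩ | ⟨rfl, hy⟩ | ⟨i', j', hij', hj'K, rfl, hy⟩)
    · injection hy with h; subst h; rw [hpa.2.1 u u' v huv huv']
    · simp at hy
    · simp at hy
    · simp at hy
    · rfl
    · injection hy with h
      have hval : (0:ℕ) = (j':ℕ) := congrArg Fin.val h
      omega
    · simp at hy
    · injection hy with h
      have hval : (j:ℕ) = (0:ℕ) := congrArg Fin.val h
      omega
    · injection hy with h
      have hval : (j:ℕ) = (j':ℕ) := congrArg Fin.val h
      have : (i:ℕ) = (i':ℕ) := by omega
      exact congrArg Sum.inr (Fin.ext this)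
  · -- order preserving
    rintro X X' Y Y'
      (⟨u, v, huv, rfl, rfl⟩ | ⟨rfl, rfl⟩ | ⟨i, j, hij, hjK, rfl, rfl⟩)
      (⟨u', v', huv', rfl, rfl⟩ | ⟨rfl, rfl⟩ | ⟨i', j', hij', hj'K, rfl, rfl⟩)
    · exact hpa.2.2 u u' v v' huv huv'
    · exact (SX htr hpa ho hoa 0 u v huv).symm
    · show u ∈ Sset lt f a0 ((i':ℕ)+1) ↔ v ∈ Sset lt f a0 ((j':ℕ)+1)
      rw [(by omega : (j':ℕ)+1 = ((i':ℕ)+1)+1)]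
      exact (SX htr hpa ho hoa ((i':ℕ)+1) u v huv).symm
    · exact (TX htr hpa 0 u' v' huv').symm
    · exact iff_of_false (hirr a0) (show ¬ ((0:ℕ) < 0) by omega)
    · exact iff_of_true (SmemA ho hoa (i':ℕ)) (show (0:ℕ) < (j':ℕ) by omega)
    · show u' ∈ Tset lt f a0 ((i:ℕ)+1) ↔ v' ∈ Tset lt f a0 ((j:ℕ)+1)
      rw [(by omega : (j:ℕ)+1 = ((i:ℕ)+1)+1)]
      exact (TX htr hpa ((i:ℕ)+1) u' v' huv').symm
    · refine iff_of_false ?_ (show ¬ ((j:ℕ) < 0) by omega)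
      intro h
      have h' : a0 ∈ Tset lt f a0 ((i:ℕ)+1) := h
      exact hirr a0 (ST htr hpa ho hoa ((i:ℕ)+1) a0 a0 (SmemA ho hoa (i:ℕ)) h')
    · show (i:ℕ) < (i':ℕ) ↔ (j:ℕ) < (j':ℕ)
      omega

lemma iter_lift {K : ℕ} :
    ∀ m (x y : α), iterGraph f m x y →
      iterGraph (FB f a0 K) m (Sum.inl x) (Sum.inl y) := by
  intro m
  induction m with
  | zero => intro x y h; exact congrArg Sum.inl h
  | succ m ih =>
    rintro x y ⟨z, hz, hzy⟩
    exact ⟨Sum.inl z, ih x z hz, Or.inl ⟨z, y, hzy, rfl, rfl⟩⟩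

lemma iter_climb {K : ℕ} {s : α} {n : ℕ}
    (hno : iterGraph f n s o) (ho : f o a0) :
    ∀ j, j < K → ∀ (h : j < K + 1),
      iterGraph (FB f a0 K) (n + 2 + j) (Sum.inl s) (Sum.inr ⟨j, h⟩) := by
  intro j
  induction j with
  | zero =>
    intro _ h
    exact ⟨Sum.inl a0, ⟨Sum.inl o, iter_lift n s o hno, Or.inl ⟨o, a0, ho, rfl, rfl⟩⟩,
      Or.inr (Or.inl ⟨rfl, rfl⟩)⟩
  | succ j ih =>
    intro hjK h
    refine ⟨Sum.inr ⟨j, by omega⟩, ih (by omega) (by omega), ?_⟩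
    exact Or.inr (Or.inr ⟨⟨j, by omega⟩, ⟨j+1, h⟩, rfl, hjK, rfl, rfl⟩)

end Build2

end FreeExt

/-- Lemma 1: if `(A,<_A,f_A)` is a partial automorphism of a finite poset and
`s <_A f_A(s)`, then there is an extension `(B,<_B,f_B)`, an `n ∈ ℕ`, and `a <_B b`
in `B` with `f_B^n(s) = a` and `f_B` free in `(a,b)`. -/
theorem exists_free_extension (A : PA) (s t : A.carrier)
    (hst : A.f s t) (hlt : A.lt s t) :
    ∃ (B : PA) (e : A.Emb B) (n : ℕ) (a b : B.carrier),
      B.lt a b ∧ iterGraph B.f n (e.toFun s) a ∧ FreeIn B a b := by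
  classical
  haveI : Fintype A.carrier := A.fin
  obtain ⟨n, o, a0, hno, ho, hoa, haD⟩ :=
    FreeExt.orbit_top A.irrefl A.trans A.hf s t hst hlt
  set K := Fintype.card A.carrier + 1 with hKdef
  have hK1 : 1 ≤ K := by omega
  obtain ⟨mS, hmS, hS⟩ := FreeExt.exists_repeat_mono (FreeExt.Sset A.lt A.f a0)
      (fun m => FreeExt.Smono (Nat.le_succ m))
  obtain ⟨mT, hmT, hT⟩ := FreeExt.exists_repeat_anti (FreeExt.Tset A.lt A.f a0)
      (FreeExt.Tanti A.trans A.hf ho hoa)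
  have hSstab := FreeExt.stab_forever (FreeExt.Sset A.lt A.f a0) (FreeExt.SStep A.lt A.f)
      (fun m => rfl) mS hS
  have hTstab := FreeExt.stab_forever (FreeExt.Tset A.lt A.f a0) (FreeExt.TStep A.lt A.f)
      (fun m => rfl) mT hT
  have hSK : FreeExt.Sset A.lt A.f a0 (K+1) = FreeExt.Sset A.lt A.f a0 K := by
    rw [hSstab (K+1) (by omega), hSstab K (by omega)]
  have hTK : FreeExt.Tset A.lt A.f a0 (K+1) = FreeExt.Tset A.lt A.f a0 K := by
    rw [hTstab (K+1) (by omega), hTstab K (by omega)]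
  have eK : (K-1)+1 = K := by omega
  refine ⟨⟨A.carrier ⊕ Fin (K+1), inferInstance, FreeExt.ltB A.lt A.f a0 K,
      FreeExt.ltB_irrefl A.irrefl K,
      FreeExt.ltB_trans A.irrefl A.trans A.hf ho hoa K,
      FreeExt.FB A.f a0 K,
      FreeExt.hfB K A.irrefl A.trans A.hf ho hoa haD⟩,
    ⟨Sum.inl, Sum.inl_injective, fun u v => Iff.rfl, fun u v h => Or.inl ⟨u, v, h, rfl, rfl⟩⟩,
    n + 2 + (K - 1), Sum.inr ⟨K-1, by omega⟩, Sum.inr ⟨K, by omega⟩, ?_, ?_, ?_⟩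
  · show (K-1:ℕ) < K
    omega
  · exact FreeExt.iter_climb hno ho (K-1) (by omega) (by omega)
  · apply FreeExt.free_of
    · -- a not in domain
      rintro y (⟨u, v, huv, hx, rfl⟩ | ⟨hx, rfl⟩ | ⟨i, j, hij, hjK, hx, rfl⟩)
      · simp at hx
      · simp at hx
      · injection hx with h
        have hval : (K-1:ℕ) = (i:ℕ) := congrArg Fin.val h
        omega
    · -- b not in domain
      rintro y (⟨u, v, huv, hx, rfl⟩ | ⟨hx, rfl⟩ | ⟨i, j, hij, hjK, hx, rfl⟩)
      · simp at hx
      · simp at hx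
      · injection hx with h
        have hval : (K:ℕ) = (i:ℕ) := congrArg Fin.val h
        omega
    · -- h4
      rintro (w | i)
      · constructor
        · intro h
          have h1 : w ∈ FreeExt.Sset A.lt A.f a0 (K+1) := h
          rw [hSK] at h1
          left
          show w ∈ FreeExt.Sset A.lt A.f a0 ((K-1)+1)
          rw [eK]; exact h1
        · rintro (h | h)
          · have h1 : w ∈ FreeExt.Sset A.lt A.f a0 ((K-1)+1) := h
            rw [eK] at h1
            show w ∈ FreeExt.Sset A.lt A.f a0 (K+1)
            rw [hSK]; exact h1
          · simp at h
      · constructor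
        · intro h
          have h1 : (i:ℕ) < K := h
          rcases Nat.lt_or_ge (i:ℕ) (K-1) with h' | h'
          · exact Or.inl h'
          · exact Or.inr (congrArg Sum.inr (Fin.ext (show (i:ℕ) = K-1 by omega)))
        · rintro (h | h)
          · have h1 : (i:ℕ) < K-1 := h
            show (i:ℕ) < K
            omega
          · injection h with h'
            have hval : (i:ℕ) = (K-1:ℕ) := congrArg Fin.val h'
            show (i:ℕ) < K
            omega
    · -- h5
      rintro (w | i)
      · constructor
        · intro h
          have h1 : w ∈ FreeExt.Tset A.lt A.f a0 ((K-1)+1) := h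
          rw [eK, ← hTK] at h1
          exact Or.inl h1
        · rintro (h | h)
          · have h1 : w ∈ FreeExt.Tset A.lt A.f a0 (K+1) := h
            rw [hTK] at h1
            show w ∈ FreeExt.Tset A.lt A.f a0 ((K-1)+1)
            rw [eK]; exact h1
          · simp at h
      · constructor
        · intro h
          have h1 : (K-1:ℕ) < (i:ℕ) := h
          have h2 : (i:ℕ) < K+1 := i.isLt
          exact Or.inr (congrArg Sum.inr (Fin.ext (show (K:ℕ) = (i:ℕ) by omega)))
        · rintro (h | h)
          · have h1 : (K:ℕ) < (i:ℕ) := h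
            have h2 : (i:ℕ) < K+1 := i.isLt
            show (K-1:ℕ) < (i:ℕ)
            omega
          · injection h with h'
            have hval : (K:ℕ) = (i:ℕ) := congrArg Fin.val h'
            show (K-1:ℕ) < (i:ℕ)
            omega
    · -- h6a
      rintro X Y (⟨u', v', huv, rfl, rfl⟩ | ⟨rfl, rfl⟩ | ⟨i, j, hij, hjK, rfl, rfl⟩)
      · have hx := FreeExt.SX A.trans A.hf ho hoa K u' v' huv
        rw [hSK] at hx
        constructor
        · intro h
          have h1 : u' ∈ FreeExt.Sset A.lt A.f a0 ((K-1)+1) := h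
          rw [eK] at h1
          left
          show v' ∈ FreeExt.Sset A.lt A.f a0 ((K-1)+1)
          rw [eK]
          exact hx.mpr h1
        · rintro (h | h)
          · have h1 : v' ∈ FreeExt.Sset A.lt A.f a0 ((K-1)+1) := h
            rw [eK] at h1
            show u' ∈ FreeExt.Sset A.lt A.f a0 ((K-1)+1)
            rw [eK]
            exact hx.mp h1
          · simp at h
      · apply iff_of_true
        · show a0 ∈ FreeExt.Sset A.lt A.f a0 ((K-1)+1)
          exact FreeExt.SmemA ho hoa (K-1)
        · rcases Nat.lt_or_ge 0 (K-1) with h | h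
          · exact Or.inl h
          · exact Or.inr (congrArg Sum.inr (Fin.ext (show (0:ℕ) = K-1 by omega)))
      · constructor
        · intro h
          have h1 : (i:ℕ) < K-1 := h
          rcases Nat.lt_or_ge (j:ℕ) (K-1) with h' | h'
          · exact Or.inl h'
          · exact Or.inr (congrArg Sum.inr (Fin.ext (show (j:ℕ) = K-1 by omega)))
        · rintro (h | h)
          · have h1 : (j:ℕ) < K-1 := h
            show (i:ℕ) < K-1
            omega
          · injection h with h'
            have hval : (j:ℕ) = (K-1:ℕ) := congrArg Fin.val h'
            show (i:ℕ) < K-1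
            omega
    · -- h6b
      rintro X Y (⟨u', v', huv, rfl, rfl⟩ | ⟨rfl, rfl⟩ | ⟨i, j, hij, hjK, rfl, rfl⟩)
      · have hx := FreeExt.TX (a0 := a0) A.trans A.hf K u' v' huv
        constructor
        · intro h
          have h1 : u' ∈ FreeExt.Tset A.lt A.f a0 ((K-1)+1) := h
          rw [eK] at h1
          exact Or.inl (hx.mpr h1)
        · rintro (h | h)
          · have h1 : v' ∈ FreeExt.Tset A.lt A.f a0 (K+1) := h
            show u' ∈ FreeExt.Tset A.lt A.f a0 ((K-1)+1)
            rw [eK]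
            exact hx.mp h1
          · simp at h
      · apply iff_of_false
        · intro h
          have h1 : a0 ∈ FreeExt.Tset A.lt A.f a0 ((K-1)+1) := h
          exact A.irrefl a0 (FreeExt.ST A.trans A.hf ho hoa ((K-1)+1) a0 a0
            (FreeExt.SmemA ho hoa (K-1)) h1)
        · rintro (h | h)
          · have h1 : (K:ℕ) < (0:ℕ) := h
            omega
          · injection h with h'
            have hval : (K:ℕ) = (0:ℕ) := congrArg Fin.val h'
            omega
      · apply iff_of_false
        · intro h
          have h1 : (K-1:ℕ) < (i:ℕ) := h
          omega
        · rintro (h | h)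
          · have h1 : (K:ℕ) < (j:ℕ) := h
            omega
          · injection h with h'
            have hval : (K:ℕ) = (j:ℕ) := congrArg Fin.val h'
            omega
end

section
/- Let G be a Polish group acting continuously on a Polish space X. If the action has a dense orbit, then every orbit of the action is either meager or comeager in X. -/
open TopologicalSpace Set

set_option linter.unusedSectionVars false

section Aux

variable {G : Type} [Group G] [TopologicalSpace G] [IsTopologicalGroup G] [PolishSpace G]
  {X : Type} [TopologicalSpace X] [PolishSpace X] [MulAction G X] [ContinuousSMul G X]

private lemma nwd_isMeagre' {s : Set X} (h : IsNowhereDense s) : IsMeagre s :=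
  isMeagre_iff_countable_union_isNowhereDense.2
    ⟨{s}, by simpa using h, Set.countable_singleton s, by simp⟩

private lemma isMeagre_biUnion' {ι : Type} {D : Set ι} (hDc : D.Countable) {f : ι → Set X}
    (h : ∀ d ∈ D, IsMeagre (f d)) : IsMeagre (⋃ d ∈ D, f d) := by
  rw [IsMeagre, Set.compl_iUnion₂]
  exact (countable_bInter_mem hDc).2 h

private lemma smul_image_meagre' (g : G) {s : Set X} (h : IsMeagre s) :
    IsMeagre ((g • ·) '' s) := by
  have : (g • ·) '' s = (g⁻¹ • ·) ⁻¹' s := by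
    ext y; constructor
    · rintro ⟨z, hz, rfl⟩; simpa
    · intro hz; exact ⟨g⁻¹ • y, hz, by simp⟩
  rw [this]
  exact h.preimage_of_isOpenMap (continuous_const_smul _)
    (Homeomorph.smul (g⁻¹ : G) (α := X)).isOpenMap

private lemma smul_int_cl' (g : G) (s : Set X) :
    (g • ·) '' interior (closure s) = interior (closure ((g • ·) '' s)) := by
  have h1 := (Homeomorph.smul g (α := X)).image_interior (closure s)
  have h2 := (Homeomorph.smul g (α := X)).image_closure s
  rw [show ⇑(Homeomorph.smul g (α := X)) = ((g • ·) : X → X) from rfl] at h1 h2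
  rw [h1, h2]

/-- If the orbit of `x` is nonmeager, then every piece `V • x` with `V` open nonempty
is nonmeager. -/
private lemma piece_nonmeager {x : X} (hA : ¬ IsMeagre (MulAction.orbit G x))
    {V : Set G} (hV : IsOpen V) (hne : V.Nonempty) : ¬ IsMeagre ((· • x) '' V) := by
  intro hm
  apply hA
  obtain ⟨D, hDc, hDd⟩ := TopologicalSpace.exists_countable_dense G
  have hcover : MulAction.orbit G x ⊆ ⋃ d ∈ D, (d • ·) '' ((· • x) '' V) := by
    rintro _ ⟨g, rfl⟩
    have hop : IsOpen ((g * ·) '' (V⁻¹)) := isOpenMap_mul_left g _ hV.inv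
    have hne' : ((g * ·) '' (V⁻¹)).Nonempty := hne.inv.image _
    obtain ⟨d, hdD, hd⟩ := hDd.exists_mem_open hop hne'
    obtain ⟨w, hw, rfl⟩ := hd
    refine Set.mem_biUnion hdD ⟨w⁻¹ • x, ⟨w⁻¹, by simpa using hw, rfl⟩, ?_⟩
    simp [smul_smul]
  exact IsMeagre.mono hcover (isMeagre_biUnion' hDc fun d _ => smul_image_meagre' d hm)

/-- If the orbit of `x` is nonmeager, then for every `g ∈ N` with `N` open,
`g • x` lies in the interior of the closure of `N • x`. -/
private lemma mem_int_cl_piece {x : X} (hA : ¬ IsMeagre (MulAction.orbit G x))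
    (g : G) {N : Set G} (hN : IsOpen N) (hg : g ∈ N) :
    g • x ∈ interior (closure ((· • x) '' N)) := by
  suffices h1 : ∀ {V : Set G}, IsOpen V → (1:G) ∈ V →
      x ∈ interior (closure ((· • x) '' V)) by
    have hVo : IsOpen ((g⁻¹ * ·) '' N) := isOpenMap_mul_left g⁻¹ _ hN
    have hV1 : (1:G) ∈ (g⁻¹ * ·) '' N := ⟨g, hg, by simp⟩
    have h2 : g • x ∈ (g • ·) '' interior (closure ((· • x) '' ((g⁻¹ * ·) '' N))) :=
      ⟨x, h1 hVo hV1, rfl⟩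
    rw [smul_int_cl'] at h2
    have h3 : (g • ·) '' ((· • x) '' ((g⁻¹ * ·) '' N)) = (· • x) '' N := by
      rw [Set.image_image, Set.image_image]
      refine Set.image_congr fun n _ => ?_
      simp [mul_smul]
    rwa [h3] at h2
  intro V hV h1V
  obtain ⟨W, hWo, hW1, hWm⟩ := exists_open_nhds_one_mul_subset (hV.mem_nhds h1V)
  set U : Set G := W ∩ W⁻¹ with hUdef
  have hUo : IsOpen U := hWo.inter hWo.inv
  have hU1 : (1:G) ∈ U := ⟨hW1, by simpa⟩
  have hU : ∀ u ∈ U, ∀ w ∈ U, u⁻¹ * w ∈ V := by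
    rintro u ⟨-, hu⟩ w ⟨hw, -⟩
    exact hWm (Set.mul_mem_mul (by simpa using hu) hw)
  have hnm := piece_nonmeager hA hUo ⟨1, hU1⟩
  have hint : (interior (closure ((· • x) '' U))).Nonempty := by
    by_contra hc
    rw [Set.not_nonempty_iff_eq_empty] at hc
    exact hnm (nwd_isMeagre' hc)
  obtain ⟨y, hy⟩ := hint
  have hy' : y ∈ closure ((· • x) '' U) := interior_subset hy
  have hmeet : ((interior (closure ((· • x) '' U))) ∩ ((· • x) '' U)).Nonempty := by
    rw [mem_closure_iff] at hy'
    exact hy' _ isOpen_interior hy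
  obtain ⟨_, huin, ⟨u, hu, rfl⟩⟩ := hmeet
  have hx : x ∈ (u⁻¹ • ·) '' interior (closure ((· • x) '' U)) := ⟨u • x, huin, by simp⟩
  rw [smul_int_cl'] at hx
  refine interior_mono (closure_mono ?_) hx
  rintro _ ⟨_, ⟨w, hw, rfl⟩, rfl⟩
  exact ⟨u⁻¹ * w, hU u hu w hw, by simp [mul_smul]⟩

/-- A nonmeager orbit is dense, provided some orbit is dense. -/
private lemma orbit_dense_of_nonmeager {x : X} (x₀ : X)
    (hdense : Dense (MulAction.orbit G x₀)) (hA : ¬ IsMeagre (MulAction.orbit G x)) :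
    Dense (MulAction.orbit G x) := by
  set O := interior (closure (MulAction.orbit G x)) with hOdef
  have horb : (· • x) '' (Set.univ : Set G) = MulAction.orbit G x := by
    ext y; simp [MulAction.mem_orbit_iff, eq_comm]
  have hxO : x ∈ O := by
    have := mem_int_cl_piece hA 1 isOpen_univ (Set.mem_univ 1)
    rw [horb] at this
    simpa using this
  have hinv : ∀ g : G, (g • ·) '' O = O := by
    intro g
    rw [hOdef, smul_int_cl']
    congr 1
    rw [show (g • ·) '' MulAction.orbit G x = MulAction.orbit G x from ?_]
    · ext y
      constructor
      · rintro ⟨_, ⟨h, rfl⟩, rfl⟩; exact ⟨g * h, mul_smul g h x⟩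
      · rintro ⟨h, rfl⟩; exact ⟨g⁻¹ • (h • x), ⟨g⁻¹ * h, (mul_smul g⁻¹ h x)⟩, by simp⟩
  have hOne : O.Nonempty := ⟨x, hxO⟩
  obtain ⟨_, ⟨g₀, rfl⟩, hg₀O⟩ := hdense.exists_mem_open isOpen_interior hOne
  have horb₀ : MulAction.orbit G x₀ ⊆ O := by
    rintro _ ⟨h, rfl⟩
    show h • x₀ ∈ O
    have heq : h • x₀ = (h * g₀⁻¹) • (g₀ • x₀) := by simp [mul_smul]
    rw [heq, ← hinv (h * g₀⁻¹)]
    exact ⟨g₀ • x₀, hg₀O, rfl⟩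
  have hOdense : Dense O := hdense.mono horb₀
  intro y
  have h1 : y ∈ closure O := hOdense y
  have h2 : closure O ⊆ closure (MulAction.orbit G x) := by
    rw [hOdef]
    intro z hz
    have : z ∈ closure (closure (MulAction.orbit G x)) := closure_mono interior_subset hz
    rwa [closure_closure] at this
  exact h2 h1

end Aux

/-- If a Polish group `G` acts continuously on a Polish space `X` and the action has
a dense orbit, then every orbit is either meager or comeager in `X`. -/
theorem orbit_meager_or_comeager (G : Type) [Group G] [TopologicalSpace G]
    [IsTopologicalGroup G] [PolishSpace G]
    (X : Type) [TopologicalSpace X] [PolishSpace X]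
    [MulAction G X] [ContinuousSMul G X]
    (x₀ : X) (hdense : Dense (MulAction.orbit G x₀)) :
    ∀ x : X, IsMeagre (MulAction.orbit G x) ∨ MulAction.orbit G x ∈ residual X := by
  intro x
  by_cases hA : IsMeagre (MulAction.orbit G x)
  · exact Or.inl hA
  right
  letI := upgradeIsCompletelyMetrizable G
  letI := upgradeIsCompletelyMetrizable X
  -- countable basis of G
  obtain ⟨b, hbc, hbemp, hbb⟩ := TopologicalSpace.exists_countable_basis G
  have hbne : b.Nonempty := by
    rcases hbb.exists_subset_of_mem_open (Set.mem_univ (1:G)) isOpen_univ with ⟨t, htb, -, -⟩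
    exact ⟨t, htb⟩
  obtain ⟨B, hB⟩ := hbc.exists_eq_range hbne
  have hBopen : ∀ k, IsOpen (B k) := fun k => hbb.isOpen (hB ▸ Set.mem_range_self k)
  have hBbasis : ∀ (w : G) (N : Set G), IsOpen N → w ∈ N → ∃ k, w ∈ B k ∧ B k ⊆ N := by
    intro w N hN hw
    obtain ⟨t, htb, hwt, htN⟩ := hbb.exists_subset_of_mem_open hw hN
    rw [hB] at htb
    obtain ⟨k, rfl⟩ := htb
    exact ⟨k, hwt, htN⟩
  -- the pieces
  set P : ℕ → Set X := fun k => interior (closure ((· • x) '' B k)) with hPdef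
  have hPopen : ∀ k, IsOpen (P k) := fun k => isOpen_interior
  -- refinement condition
  set small : ℕ → ℕ → Prop := fun j n => ∃ c : G, B j ⊆ Metric.ball c ((1/2 : ℝ)^n)
    with hsmalldef
  set Pnext : ℕ → ℕ → Set X := fun k n => ⋃ j ∈ {j | B j ⊆ B k ∧ small j n}, P j
    with hPnextdef
  set J : ℕ → ℕ → Set X := fun k n => P k \ Pnext k n with hJdef
  -- key density claim
  have hmem_piece : ∀ (w : G) (N : Set G), IsOpen N → w ∈ N →
      w • x ∈ interior (closure ((· • x) '' N)) := fun w N hN hw => mem_int_cl_piece hA w hN hw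
  have hJnwd : ∀ k n, IsNowhereDense (J k n) := by
    intro k n
    set Q : Set X := Pnext k n ∪ (closure (P k))ᶜ with hQdef
    have hQopen : IsOpen Q := by
      refine IsOpen.union ?_ (isClosed_closure.isOpen_compl)
      exact isOpen_biUnion fun j _ => hPopen j
    have hQdense : Dense Q := by
      rw [dense_iff_inter_open]
      intro O' hO' hO'ne
      by_cases hcase : (O' ∩ (closure (P k))ᶜ).Nonempty
      · exact hcase.mono (Set.inter_subset_inter_right O' Set.subset_union_right)
      · rw [Set.not_nonempty_iff_eq_empty] at hcase
        have hO'sub : O' ⊆ closure (P k) := by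
          intro z hz
          by_contra hzc
          exact Set.eq_empty_iff_forall_notMem.1 hcase z ⟨hz, hzc⟩
        -- O' meets P k
        obtain ⟨y₀, hy₀⟩ := hO'ne
        have h1 : (O' ∩ P k).Nonempty := by
          have hcl := hO'sub hy₀
          rw [mem_closure_iff] at hcl
          exact hcl O' hO' hy₀
        obtain ⟨y₁, hy₁O, hy₁P⟩ := h1
        -- O' ∩ P k is open nonempty ⊆ closure ((· • x) '' B k)
        have h2 : ((O' ∩ P k) ∩ ((· • x) '' B k)).Nonempty := by
          have : y₁ ∈ closure ((· • x) '' B k) := interior_subset hy₁P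
          rw [mem_closure_iff] at this
          exact this _ (hO'.inter (hPopen k)) ⟨hy₁O, hy₁P⟩
        obtain ⟨_, ⟨hzO, hzP⟩, ⟨w, hwB, rfl⟩⟩ := h2
        -- pick a small basis element around w inside B k
        have hball : IsOpen (B k ∩ Metric.ball w ((1/2 : ℝ)^n)) :=
          (hBopen k).inter Metric.isOpen_ball
        have hwmem : w ∈ B k ∩ Metric.ball w ((1/2 : ℝ)^n) :=
          ⟨hwB, Metric.mem_ball_self (by positivity)⟩
        obtain ⟨j, hwj, hjsub⟩ := hBbasis w _ hball hwmem
        have hjB : B j ⊆ B k := hjsub.trans Set.inter_subset_left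
        have hjsmall : small j n := ⟨w, hjsub.trans Set.inter_subset_right⟩
        have : w • x ∈ P j := hmem_piece w (B j) (hBopen j) hwj
        exact ⟨w • x, hzO, Set.mem_union_left _ (Set.mem_biUnion ⟨hjB, hjsmall⟩ this)⟩
    -- J k n ∩ Q = ∅, so J is nowhere dense
    have hdisj : J k n ∩ Q = ∅ := by
      rw [Set.eq_empty_iff_forall_notMem]
      rintro z ⟨⟨hzP, hzR⟩, hzQ⟩
      rcases hzQ with h | h
      · exact hzR h
      · exact h (subset_closure hzP)
    rw [IsNowhereDense]
    have hJsub : closure (J k n) ⊆ Qᶜ := by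
      rw [← hQopen.isClosed_compl.closure_eq]
      refine closure_mono fun z hz => ?_
      intro hzQ
      exact Set.eq_empty_iff_forall_notMem.1 hdisj z ⟨hz, hzQ⟩
    have : interior (closure (J k n)) ⊆ interior Qᶜ := interior_mono hJsub
    rw [interior_compl, hQdense.closure_eq, Set.compl_univ] at this
    exact Set.eq_empty_iff_forall_notMem.2 fun z hz => this hz
  -- the residual set
  set M : Set X := ⋃ k, ⋃ n, J k n with hMdef
  have hM : IsMeagre M := by
    rw [IsMeagre, hMdef, Set.compl_iUnion]
    refine countable_iInter_mem.2 fun k => ?_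
    rw [Set.compl_iUnion]
    exact countable_iInter_mem.2 fun n => nwd_isMeagre' (hJnwd k n)
  set U₀ : Set X := ⋃ k, P k with hU₀def
  have hU₀res : U₀ ∈ residual X := by
    refine residual_of_dense_open (isOpen_iUnion fun k => hPopen k) ?_
    have horbsub : MulAction.orbit G x ⊆ U₀ := by
      rintro _ ⟨g, rfl⟩
      obtain ⟨k, hgk, -⟩ := hBbasis g Set.univ isOpen_univ (Set.mem_univ g)
      exact Set.mem_iUnion.2 ⟨k, hmem_piece g (B k) (hBopen k) hgk⟩
    exact (orbit_dense_of_nonmeager x₀ hdense hA).mono horbsub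
  have hres : U₀ ∩ Mᶜ ∈ residual X := Filter.inter_mem hU₀res hM
  refine Filter.mem_of_superset hres ?_
  -- main construction : every point of U₀ \ M is in the orbit
  rintro y ⟨hyU, hyM⟩
  have hstep : ∀ (n : ℕ) (k : ℕ), y ∈ P k →
      ∃ j, (B j ⊆ B k ∧ small j n) ∧ y ∈ P j := by
    intro n k hy
    have : y ∉ J k n := fun h => hyM (Set.mem_iUnion.2 ⟨k, Set.mem_iUnion.2 ⟨n, h⟩⟩)
    rw [hJdef] at this
    simp only [Set.mem_diff, not_and, not_not] at this
    have hy2 : y ∈ Pnext k n := this hy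
    rw [hPnextdef] at hy2
    obtain ⟨j, hj, hyj⟩ := Set.mem_iUnion₂.1 hy2
    exact ⟨j, hj, hyj⟩
  obtain ⟨k₀, hk₀⟩ := Set.mem_iUnion.1 hyU
  -- build the sequence of basis sets
  let T : Type := {k : ℕ // y ∈ P k}
  let step : ℕ → T → T := fun n p => ⟨(hstep n p.1 p.2).choose, (hstep n p.1 p.2).choose_spec.2⟩
  let seq : ℕ → T := fun n => Nat.rec ⟨k₀, hk₀⟩ step n
  have hseq_succ : ∀ n, seq (n+1) = step n (seq n) := fun n => rfl
  have hsub : ∀ n, B (seq (n+1)).1 ⊆ B (seq n).1 := by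
    intro n
    exact (hstep n (seq n).1 (seq n).2).choose_spec.1.1
  have hsmall : ∀ n, small (seq (n+1)).1 n := by
    intro n
    exact (hstep n (seq n).1 (seq n).2).choose_spec.1.2
  have hyP : ∀ n, y ∈ P (seq n).1 := fun n => (seq n).2
  -- each basis set in the sequence is nonempty
  have hBne : ∀ n, (B (seq n).1).Nonempty := by
    intro n
    have h1 : y ∈ closure ((· • x) '' B (seq n).1) := interior_subset (hyP n)
    have h2 : ((· • x) '' B (seq n).1).Nonempty := by
      by_contra hc
      rw [Set.not_nonempty_iff_eq_empty] at hc
      rw [hc, closure_empty] at h1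
      exact h1
    exact h2.of_image
  choose w hw using hBne
  -- monotonicity
  have hmono : ∀ m n, n ≤ m → B (seq m).1 ⊆ B (seq n).1 := by
    intro m n hnm
    induction m with
    | zero => rw [Nat.le_zero.1 hnm]
    | succ m ih =>
      rcases Nat.lt_or_ge n (m+1) with h | h
      · exact (hsub m).trans (ih (Nat.lt_succ_iff.1 h))
      · rw [Nat.le_antisymm hnm h]
  -- Cauchy
  have hcauchy : CauchySeq w := by
    rw [Metric.cauchySeq_iff']
    intro ε hε
    obtain ⟨n, hn⟩ := exists_pow_lt_of_lt_one (half_pos hε) (by norm_num : (1/2 : ℝ) < 1)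
    refine ⟨n + 1, fun m hm => ?_⟩
    obtain ⟨c, hc⟩ := hsmall n
    have h1 : w m ∈ Metric.ball c ((1/2:ℝ)^n) := hc (hmono m (n+1) hm (hw m))
    have h2 : w (n+1) ∈ Metric.ball c ((1/2:ℝ)^n) := hc (hw (n+1))
    calc dist (w m) (w (n+1)) ≤ dist (w m) c + dist c (w (n+1)) := dist_triangle _ _ _
      _ < (1/2:ℝ)^n + (1/2:ℝ)^n := by
          rw [Metric.mem_ball] at h1 h2
          rw [dist_comm c (w (n+1))]
          exact add_lt_add h1 h2
      _ < ε / 2 + ε / 2 := add_lt_add hn hn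
      _ = ε := add_halves ε
  obtain ⟨g, hg⟩ := cauchySeq_tendsto_of_complete hcauchy
  refine ⟨g, ?_⟩
  show g • x = y
  symm
  refine eq_of_forall_dist_le fun ε hε => ?_
  -- continuity of the orbit map at g
  have hcont : Continuous fun h : G => h • x := continuous_id.smul continuous_const
  obtain ⟨δ, hδpos, hδ⟩ := Metric.continuousAt_iff.1
    (hcont.continuousAt : ContinuousAt (fun h : G => h • x) g) (ε/2) (half_pos hε)
  -- find n with B (seq (n+1)) ⊆ ball g δ
  obtain ⟨n, hn⟩ := exists_pow_lt_of_lt_one (by positivity : (0:ℝ) < δ/3)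
    (by norm_num : (1/2 : ℝ) < 1)
  obtain ⟨c, hc⟩ := hsmall n
  have hcg : dist c g ≤ (1/2:ℝ)^n + (1/2:ℝ)^n := by
    have hlim : Filter.Tendsto (fun m => dist c (w m)) Filter.atTop (nhds (dist c g)) :=
      (continuous_const.dist continuous_id).continuousAt.tendsto.comp hg
    refine le_of_tendsto hlim ?_
    rw [Filter.eventually_atTop]
    refine ⟨n + 1, fun m hm => ?_⟩
    have : w m ∈ Metric.ball c ((1/2:ℝ)^n) := hc (hmono m (n+1) hm (hw m))
    rw [Metric.mem_ball, dist_comm] at this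
    have hpos : (0:ℝ) ≤ (1/2:ℝ)^n := by positivity
    linarith [this.le]
  have hsubball : B (seq (n+1)).1 ⊆ Metric.ball g δ := by
    intro h hh
    have h1 : dist h c < (1/2:ℝ)^n := Metric.mem_ball.1 (hc hh)
    rw [Metric.mem_ball]
    calc dist h g ≤ dist h c + dist c g := dist_triangle _ _ _
      _ < (1/2:ℝ)^n + ((1/2:ℝ)^n + (1/2:ℝ)^n) := by linarith
      _ < δ/3 + (δ/3 + δ/3) := by linarith
      _ = δ := by ring
  have himg : (· • x) '' B (seq (n+1)).1 ⊆ Metric.closedBall (g • x) (ε/2) := by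
    rintro _ ⟨h, hh, rfl⟩
    have := hδ (Metric.mem_ball.1 (hsubball hh))
    exact Metric.mem_closedBall.2 (le_of_lt this)
  have hycl : y ∈ Metric.closedBall (g • x) (ε/2) :=
    (closure_minimal himg Metric.isClosed_closedBall) (interior_subset (hyP (n+1)))
  exact le_trans (Metric.mem_closedBall.1 hycl) (by linarith)
end

section
/- Let (P,<) be a countable partial order such that (1) every finite partial order embeds into (P,<), and (2) for any two embeddings f, g of a finite partial order into (P,<) there is an automorphism φ of (P,<) with φ∘f = g. Then the diagonal conjugation action of Aut(P,<) on Aut(P,<)², given by g·(f₁,f₂) = (g f₁ g⁻¹, g f₂ g⁻¹), has a dense orbit. -/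
/-- An embedding of posets: an injective map `e` with `a < a' ↔ e a < e a'`. -/
def PosetEmb {A P : Type} [PartialOrder A] [PartialOrder P] (e : A → P) : Prop :=
  Function.Injective e ∧ ∀ a a' : A, a < a' ↔ e a < e a'

section RP
variable {P : Type} [PartialOrder P]

/-- A finite set of pairs that is a partial order-isomorphism graph. -/
def RPGood (s : Finset (P × P)) : Prop :=
  ∀ p ∈ s, ∀ q ∈ s, (p.1 < q.1 ↔ p.2 < q.2) ∧ (p.1 = q.1 ↔ p.2 = q.2)

theorem rpGood_of_graph (ψ : P ≃o P) (s : Finset (P × P)) (h : ∀ p ∈ s, ψ p.1 = p.2) :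
    RPGood s := by
  intro p hp q hq
  constructor
  · rw [← h p hp, ← h q hq]; exact ψ.lt_iff_lt.symm
  · rw [← h p hp, ← h q hq]; exact ψ.injective.eq_iff.symm

theorem rpGood_extend
    (h2 : ∀ (A : Type) [Fintype A] [PartialOrder A] (f g : A → P),
      PosetEmb f → PosetEmb g → ∃ φ : P ≃o P, ∀ a : A, φ (f a) = g a)
    (s : Finset (P × P)) (hs : RPGood s) : ∃ ψ : P ≃o P, ∀ p ∈ s, ψ p.1 = p.2 := by
  classical
  have pick : ∀ a : ↥(s.image Prod.fst), ∃ b, ((a : P), b) ∈ s := by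
    rintro ⟨a, ha⟩
    obtain ⟨p, hp, rfl⟩ := Finset.mem_image.mp ha
    exact ⟨p.2, hp⟩
  set g : ↥(s.image Prod.fst) → P := fun a => Classical.choose (pick a) with hgdef
  have hg : ∀ a : ↥(s.image Prod.fst), ((a : P), g a) ∈ s := fun a => Classical.choose_spec (pick a)
  have embv : PosetEmb (Subtype.val : ↥(s.image Prod.fst) → P) :=
    ⟨Subtype.val_injective, fun a b => Subtype.coe_lt_coe.symm⟩
  have embg : PosetEmb g := by
    constructor
    · intro a b hab
      exact Subtype.ext ((hs _ (hg a) _ (hg b)).2.mpr hab)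
    · intro a b
      have := (hs _ (hg a) _ (hg b)).1
      rw [← this]; exact Subtype.coe_lt_coe.symm
  obtain ⟨φ, hφ⟩ := h2 _ Subtype.val g embv embg
  refine ⟨φ, ?_⟩
  intro p hp
  have hmem : p.1 ∈ s.image Prod.fst := Finset.mem_image_of_mem _ hp
  have h1' := hφ ⟨p.1, hmem⟩
  have := (hs _ (hg ⟨p.1, hmem⟩) _ hp).2.mp rfl
  rw [h1']; exact this



theorem rp_free_emb
    (h1 : ∀ (A : Type) [Fintype A] [PartialOrder A], ∃ e : A → P, PosetEmb e)
    (h2 : ∀ (A : Type) [Fintype A] [PartialOrder A] (f g : A → P),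
      PosetEmb f → PosetEmb g → ∃ φ : P ≃o P, ∀ a : A, φ (f a) = g a)
    (D B : Finset P) :
    ∃ e : P → P,
      (∀ b ∈ B, ∀ b' ∈ B, (b < b' ↔ e b < e b') ∧ (b = b' ↔ e b = e b')) ∧
      (∀ b ∈ B, ∀ d ∈ D, e b ≠ d ∧ ¬ e b < d ∧ ¬ d < e b) := by
  classical
  obtain ⟨e₀, he₀⟩ := h1 (↥D ⊕ ↥B)
  have emb1 : PosetEmb (fun d : ↥D => e₀ (Sum.inl d)) := by
    constructor
    · exact fun a b h => Sum.inl_injective (he₀.1 h)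
    · intro a b
      rw [← he₀.2]
      simp
  have embv : PosetEmb (Subtype.val : ↥D → P) :=
    ⟨Subtype.val_injective, fun a b => Subtype.coe_lt_coe.symm⟩
  obtain ⟨φ, hφ⟩ := h2 _ _ _ emb1 embv
  refine ⟨fun x => if h : x ∈ B then φ (e₀ (Sum.inr ⟨x, h⟩)) else x, ?_, ?_⟩
  · intro b hb b' hb'
    simp only [dif_pos hb, dif_pos hb']
    constructor
    · rw [φ.lt_iff_lt, ← he₀.2]
      simp [Subtype.coe_lt_coe]
    · constructor
      · rintro rfl; rfl
      · intro h
        exact congrArg Subtype.val (Sum.inr_injective (he₀.1 (φ.injective h)))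
  · intro b hb d hd
    simp only [dif_pos hb]
    have hdeq : φ (e₀ (Sum.inl ⟨d, hd⟩)) = d := hφ ⟨d, hd⟩
    refine ⟨?_, ?_, ?_⟩
    · intro h
      rw [← hdeq] at h
      have := he₀.1 (φ.injective h)
      simp at this
    · intro h
      rw [← hdeq, φ.lt_iff_lt, ← he₀.2] at h
      simp at h
    · intro h
      rw [← hdeq, φ.lt_iff_lt, ← he₀.2] at h
      simp at h

/-- Task type: either "put `x` in the domain and range of the `i`-th map", or
"realize the finite system `(F, u₁, u₂)` of two partial maps". -/
def RPTask (P : Type) [PartialOrder P] : Type :=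
  (Bool × P) ⊕ (Σ F : Finset P, (↥F → P) × (↥F → P))

instance (P : Type) [PartialOrder P] [Countable P] : Countable (RPTask P) := by
  unfold RPTask; infer_instance

/-- A good finite system: `u` is an injective order-embedding of `F` into `P`. -/
def RPGoodSys {P : Type} [PartialOrder P] (F : Finset P) (u : ↥F → P) : Prop :=
  Function.Injective u ∧ ∀ x y : ↥F, (x : P) < (y : P) ↔ u x < u y

def RPSysB {P : Type} [PartialOrder P] [DecidableEq P] (F : Finset P) (u₁ u₂ : ↥F → P) : Finset P :=
  F ∪ F.attach.image u₁ ∪ F.attach.image u₂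

/-- One construction step: `q'` extends `q` and handles task `t`. -/
def RPNext {P : Type} [PartialOrder P] [DecidableEq P]
    (q q' : Finset (P × P) × Finset (P × P)) : RPTask P → Prop
  | .inl (i, x) =>
      q.1 ⊆ q'.1 ∧ q.2 ⊆ q'.2 ∧
      (∃ y, (x, y) ∈ (if i then q'.1 else q'.2)) ∧
      (∃ z, (z, x) ∈ (if i then q'.1 else q'.2))
  | .inr ⟨F, u₁, u₂⟩ =>
      q.1 ⊆ q'.1 ∧ q.2 ⊆ q'.2 ∧
      (RPGoodSys F u₁ → RPGoodSys F u₂ → ∃ e : P → P,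
        (∀ b ∈ RPSysB F u₁ u₂, ∀ b' ∈ RPSysB F u₁ u₂,
          (b < b' ↔ e b < e b') ∧ (b = b' ↔ e b = e b')) ∧
        ∀ x : ↥F, (e ↑x, e (u₁ x)) ∈ q'.1 ∧ (e ↑x, e (u₂ x)) ∈ q'.2)

theorem rpNext_subset {P : Type} [PartialOrder P] [DecidableEq P]
    {q q' : Finset (P × P) × Finset (P × P)} {t : RPTask P} (h : RPNext q q' t) :
    q.1 ⊆ q'.1 ∧ q.2 ⊆ q'.2 := by
  rcases t with ⟨i, x⟩ | ⟨F, u₁, u₂⟩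
  · exact ⟨h.1, h.2.1⟩
  · exact ⟨h.1, h.2.1⟩

theorem rp_step
    {P : Type} [PartialOrder P] [DecidableEq P]
    (h1 : ∀ (A : Type) [Fintype A] [PartialOrder A], ∃ e : A → P, PosetEmb e)
    (h2 : ∀ (A : Type) [Fintype A] [PartialOrder A] (f g : A → P),
      PosetEmb f → PosetEmb g → ∃ φ : P ≃o P, ∀ a : A, φ (f a) = g a)
    (q : Finset (P × P) × Finset (P × P)) (hq : RPGood q.1 ∧ RPGood q.2) (t : RPTask P) :
    ∃ q', (RPGood q'.1 ∧ RPGood q'.2) ∧ RPNext q q' t := by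
  classical
  rcases t with ⟨i, x⟩ | ⟨F, u₁, u₂⟩
  · -- point task
    have key : ∀ s : Finset (P × P), RPGood s →
        ∃ s', RPGood s' ∧ s ⊆ s' ∧ (∃ y, (x, y) ∈ s') ∧ (∃ z, (z, x) ∈ s') := by
      intro s hs
      obtain ⟨ψ, hψ⟩ := rpGood_extend h2 s hs
      refine ⟨insert (x, ψ x) (insert (ψ.symm x, x) s), ?_, ?_, ⟨ψ x, ?_⟩, ⟨ψ.symm x, ?_⟩⟩
      · refine rpGood_of_graph ψ _ ?_
        intro p hp
        rcases Finset.mem_insert.mp hp with rfl | hp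
        · rfl
        rcases Finset.mem_insert.mp hp with rfl | hp
        · exact ψ.apply_symm_apply x
        · exact hψ p hp
      · intro p hp; exact Finset.mem_insert_of_mem (Finset.mem_insert_of_mem hp)
      · exact Finset.mem_insert_self _ _
      · exact Finset.mem_insert_of_mem (Finset.mem_insert_self _ _)
    cases i
    · obtain ⟨s', hg, hsub, hy, hz⟩ := key q.2 hq.2
      exact ⟨(q.1, s'), ⟨hq.1, hg⟩, Finset.Subset.refl _, hsub, by simpa using hy,
        by simpa using hz⟩
    · obtain ⟨s', hg, hsub, hy, hz⟩ := key q.1 hq.1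
      exact ⟨(s', q.2), ⟨hg, hq.2⟩, hsub, Finset.Subset.refl _, by simpa using hy,
        by simpa using hz⟩
  · -- system task
    by_cases hgood : RPGoodSys F u₁ ∧ RPGoodSys F u₂
    · obtain ⟨hg1, hg2⟩ := hgood
      obtain ⟨e, he, hfree⟩ := rp_free_emb h1 h2
        ((q.1 ∪ q.2).image Prod.fst ∪ (q.1 ∪ q.2).image Prod.snd) (RPSysB F u₁ u₂)
      set D : Finset P :=
        (q.1 ∪ q.2).image Prod.fst ∪ (q.1 ∪ q.2).image Prod.snd with hD
      set B : Finset P := RPSysB F u₁ u₂ with hB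
      have hxB : ∀ z : ↥F, (z : P) ∈ B := by
        intro z
        rw [hB]; unfold RPSysB
        exact Finset.mem_union_left _ (Finset.mem_union_left _ z.2)
      have huB : ∀ z : ↥F, u₁ z ∈ B ∧ u₂ z ∈ B := by
        intro z
        rw [hB]; unfold RPSysB
        constructor
        · exact Finset.mem_union_left _ (Finset.mem_union_right _
            (Finset.mem_image_of_mem _ (Finset.mem_attach _ _)))
        · exact Finset.mem_union_right _
            (Finset.mem_image_of_mem _ (Finset.mem_attach _ _))
      -- extending one component
      have key : ∀ (s : Finset (P × P)) (u : ↥F → P), RPGoodSys F u →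
          (∀ z : ↥F, u z ∈ B) → s ⊆ q.1 ∪ q.2 → RPGood s →
          RPGood (s ∪ F.attach.image (fun z : ↥F => (e ↑z, e (u z)))) := by
        intro s u hu huB' hsub hs
        have hD1 : ∀ p ∈ s, p.1 ∈ D ∧ p.2 ∈ D := by
          intro p hp
          exact ⟨Finset.mem_union_left _ (Finset.mem_image_of_mem _ (hsub hp)),
            Finset.mem_union_right _ (Finset.mem_image_of_mem _ (hsub hp))⟩
        intro p hp r hr
        have hnew : ∀ w ∈ F.attach.image (fun z : ↥F => (e ↑z, e (u z))),
            ∃ z : ↥F, w = (e ↑z, e (u z)) := by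
          intro w hw
          obtain ⟨z, _, rfl⟩ := Finset.mem_image.mp hw
          exact ⟨z, rfl⟩
        rcases Finset.mem_union.mp hp with hp' | hp' <;>
          rcases Finset.mem_union.mp hr with hr' | hr'
        · exact hs p hp' r hr'
        · -- p old, r new
          obtain ⟨z, rfl⟩ := hnew r hr'
          obtain ⟨hp1, hp2⟩ := hD1 p hp'
          have c1 := hfree _ (hxB z) _ hp1
          have c2 := hfree _ (huB' z) _ hp2
          constructor
          · simp only [iff_iff_implies_and_implies]
            exact ⟨fun h => absurd h c1.2.2, fun h => absurd h c2.2.2⟩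
          · simp only [iff_iff_implies_and_implies]
            exact ⟨fun h => absurd h.symm c1.1, fun h => absurd h.symm c2.1⟩
        · -- p new, r old
          obtain ⟨z, rfl⟩ := hnew p hp'
          obtain ⟨hr1, hr2⟩ := hD1 r hr'
          have c1 := hfree _ (hxB z) _ hr1
          have c2 := hfree _ (huB' z) _ hr2
          constructor
          · simp only [iff_iff_implies_and_implies]
            exact ⟨fun h => absurd h c1.2.1, fun h => absurd h c2.2.1⟩
          · simp only [iff_iff_implies_and_implies]
            exact ⟨fun h => absurd h c1.1, fun h => absurd h c2.1⟩
        · -- both new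
          obtain ⟨z, rfl⟩ := hnew p hp'
          obtain ⟨w, rfl⟩ := hnew r hr'
          constructor
          · have a1 := (he _ (hxB z) _ (hxB w)).1
            have a2 := (he _ (huB' z) _ (huB' w)).1
            simp only
            rw [← a1, ← a2, ← hu.2]
          · have a1 := (he _ (hxB z) _ (hxB w)).2
            have a2 := (he _ (huB' z) _ (huB' w)).2
            simp only
            rw [← a1, ← a2]
            constructor
            · intro h
              exact congrArg u (Subtype.ext h)
            · intro h
              exact congrArg Subtype.val (hu.1 h)
      refine ⟨(q.1 ∪ F.attach.image (fun z : ↥F => (e ↑z, e (u₁ z))),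
               q.2 ∪ F.attach.image (fun z : ↥F => (e ↑z, e (u₂ z)))), ?_, ?_, ?_, ?_⟩
      · exact ⟨key q.1 u₁ hg1 (fun z => (huB z).1) Finset.subset_union_left hq.1,
          key q.2 u₂ hg2 (fun z => (huB z).2) Finset.subset_union_right hq.2⟩
      · exact Finset.subset_union_left
      · exact Finset.subset_union_left
      · intro _ _
        refine ⟨e, he, ?_⟩
        intro z
        constructor
        · exact Finset.mem_union_right _ (Finset.mem_image_of_mem _ (Finset.mem_attach _ _))
        · exact Finset.mem_union_right _ (Finset.mem_image_of_mem _ (Finset.mem_attach _ _))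
    · refine ⟨q, hq, Finset.Subset.refl _, Finset.Subset.refl _, ?_⟩
      intro hg1 hg2
      exact absurd ⟨hg1, hg2⟩ hgood


/-- The topology of pointwise convergence on the automorphism group of a poset `P`:
the topology induced from the product topology on `P → P`, where `P` is discrete. -/
def autTop (P : Type) [PartialOrder P] : TopologicalSpace (P ≃o P) :=
  letI : TopologicalSpace P := ⊥
  TopologicalSpace.induced (fun f => (f : P → P)) Pi.topologicalSpace

theorem autTop_nhds_mem {P : Type} [PartialOrder P] (h : P ≃o P) (U : Set (P ≃o P))
    (hU : U ∈ @nhds _ (autTop P) h) :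
    ∃ I : Finset P, ∀ k : P ≃o P, (∀ x ∈ I, k x = h x) → k ∈ U := by
  classical
  letI : TopologicalSpace P := ⊥
  haveI : DiscreteTopology P := ⟨rfl⟩
  have heq : @nhds _ (autTop P) h =
      Filter.comap (fun f : P ≃o P => (f : P → P)) (@nhds _ Pi.topologicalSpace ⇑h) :=
    nhds_induced (fun f : P ≃o P => (f : P → P)) h
  rw [heq] at hU
  obtain ⟨V, hV, hVsub⟩ := Filter.mem_comap.mp hU
  rw [nhds_pi] at hV
  obtain ⟨I, hIfin, t, ht, hsub⟩ := (Filter.mem_pi).mp hV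
  refine ⟨hIfin.toFinset, ?_⟩
  intro k hk
  apply hVsub
  apply hsub
  intro x hx
  have hkx : k x = h x := hk x (hIfin.mem_toFinset.mpr hx)
  show k x ∈ t x
  rw [hkx]
  have := ht x
  rw [nhds_discrete] at this
  exact this

end RP
/-- The diagonal conjugation action of `Aut(P)` on `Aut(P)²` has a dense orbit,
where `P` is the random poset. -/
theorem diagonal_conjugation_dense_orbit (P : Type) [PartialOrder P] [Countable P]
    (h1 : ∀ (A : Type) [Fintype A] [PartialOrder A], ∃ e : A → P, PosetEmb e)
    (h2 : ∀ (A : Type) [Fintype A] [PartialOrder A] (f g : A → P),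
      PosetEmb f → PosetEmb g → ∃ φ : P ≃o P, ∀ a : A, φ (f a) = g a) :
    letI : TopologicalSpace (P ≃o P) := autTop P
    ∃ f₁ f₂ : P ≃o P,
      Dense {p : (P ≃o P) × (P ≃o P) |
        ∃ g : P ≃o P, p = (g * f₁ * g⁻¹, g * f₂ * g⁻¹)} := by
  classical
  letI : TopologicalSpace (P ≃o P) := autTop P
  haveI : Nonempty (RPTask P) :=
    ⟨Sum.inr ⟨∅, fun x => absurd x.2 (Finset.notMem_empty _), fun x => absurd x.2 (Finset.notMem_empty _)⟩⟩
  obtain ⟨τ, hτ⟩ := exists_surjective_nat (RPTask P)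
  choose step hstepG hstepN using rp_step h1 h2
  let seq : ℕ → {q : Finset (P × P) × Finset (P × P) // RPGood q.1 ∧ RPGood q.2} :=
    fun n => Nat.rec
      (motive := fun _ => {q : Finset (P × P) × Finset (P × P) // RPGood q.1 ∧ RPGood q.2})
      ⟨(∅, ∅), ⟨fun p hp => absurd hp (Finset.notMem_empty p),
        fun p hp => absurd hp (Finset.notMem_empty p)⟩⟩
      (fun n r => ⟨step r.1 r.2 (τ n), hstepG r.1 r.2 (τ n)⟩) n
  have hseq : ∀ n, RPNext (seq n).1 (seq (n + 1)).1 (τ n) := fun n => hstepN _ _ _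
  have mono : ∀ m n, m ≤ n → (seq m).1.1 ⊆ (seq n).1.1 ∧ (seq m).1.2 ⊆ (seq n).1.2 := by
    intro m n hmn
    induction hmn with
    | refl => exact ⟨Finset.Subset.refl _, Finset.Subset.refl _⟩
    | @step n' h ih =>
        obtain ⟨a, b⟩ := rpNext_subset (hseq n')
        exact ⟨ih.1.trans a, ih.2.trans b⟩
  -- the union of the chain, for each of the two coordinates
  set S : Bool → Set (P × P) :=
    fun i => {p | ∃ n, p ∈ (if i then (seq n).1.1 else (seq n).1.2)} with hS
  have coh : ∀ i : Bool, ∀ p ∈ S i, ∀ r ∈ S i,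
      (p.1 < r.1 ↔ p.2 < r.2) ∧ (p.1 = r.1 ↔ p.2 = r.2) := by
    intro i p hp r hr
    obtain ⟨n, hn⟩ := hp
    obtain ⟨m, hm⟩ := hr
    have h1n : ∀ w, (w ∈ (if i then (seq n).1.1 else (seq n).1.2)) →
        (w ∈ (if i then (seq (max n m)).1.1 else (seq (max n m)).1.2)) := by
      cases i
      · exact fun w hw => (mono n (max n m) (le_max_left n m)).2 hw
      · exact fun w hw => (mono n (max n m) (le_max_left n m)).1 hw
    have h1m : ∀ w, (w ∈ (if i then (seq m).1.1 else (seq m).1.2)) →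
        (w ∈ (if i then (seq (max n m)).1.1 else (seq (max n m)).1.2)) := by
      cases i
      · exact fun w hw => (mono m (max n m) (le_max_right n m)).2 hw
      · exact fun w hw => (mono m (max n m) (le_max_right n m)).1 hw
    have hgood : RPGood (if i then (seq (max n m)).1.1 else (seq (max n m)).1.2) := by
      cases i
      · exact (seq (max n m)).2.2
      · exact (seq (max n m)).2.1
    exact hgood p (h1n p hn) r (h1m r hm)
  have tot : ∀ (i : Bool) (x : P), ∃ y, (x, y) ∈ S i := by
    intro i x
    obtain ⟨n, hn⟩ := hτ (Sum.inl (i, x))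
    have h := hseq n
    rw [hn] at h
    obtain ⟨y, hy⟩ := h.2.2.1
    exact ⟨y, n + 1, hy⟩
  have sur : ∀ (i : Bool) (y : P), ∃ x, (x, y) ∈ S i := by
    intro i y
    obtain ⟨n, hn⟩ := hτ (Sum.inl (i, y))
    have h := hseq n
    rw [hn] at h
    obtain ⟨z, hz⟩ := h.2.2.2
    exact ⟨z, n + 1, hz⟩
  have F : ∀ i : Bool, ∃ f : P ≃o P, ∀ x y : P, ((x, y) ∈ S i ↔ f x = y) := by
    intro i
    have hf : ∀ x, (x, Classical.choose (tot i x)) ∈ S i :=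
      fun x => Classical.choose_spec (tot i x)
    have hg : ∀ y, (Classical.choose (sur i y), y) ∈ S i :=
      fun y => Classical.choose_spec (sur i y)
    refine ⟨⟨⟨fun x => Classical.choose (tot i x), fun y => Classical.choose (sur i y),
      ?_, ?_⟩, ?_⟩, ?_⟩
    · intro x
      exact (coh i _ (hg (Classical.choose (tot i x))) _ (hf x)).2.mpr rfl
    · intro y
      exact (coh i _ (hf (Classical.choose (sur i y))) _ (hg y)).2.mp rfl
    · intro a b
      have hlt := (coh i _ (hf a) _ (hf b)).1
      have heq := (coh i _ (hf a) _ (hf b)).2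
      simp only [le_iff_lt_or_eq]
      exact or_congr hlt.symm heq.symm
    · intro x y
      constructor
      · intro hxy
        exact (coh i _ (hf x) _ hxy).2.mp rfl
      · rintro rfl
        exact hf x
  choose f hfS using F
  have real : ∀ (Fs : Finset P) (u₁ u₂ : ↥Fs → P), RPGoodSys Fs u₁ → RPGoodSys Fs u₂ →
      ∃ e : P → P,
        (∀ b ∈ RPSysB Fs u₁ u₂, ∀ b' ∈ RPSysB Fs u₁ u₂,
          (b < b' ↔ e b < e b') ∧ (b = b' ↔ e b = e b')) ∧
        ∀ x : ↥Fs, f true (e ↑x) = e (u₁ x) ∧ f false (e ↑x) = e (u₂ x) := by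
    intro Fs u₁ u₂ hg1 hg2
    obtain ⟨n, hn⟩ := hτ (Sum.inr ⟨Fs, u₁, u₂⟩)
    have h := hseq n
    rw [hn] at h
    obtain ⟨e, he, hmem⟩ := h.2.2 hg1 hg2
    refine ⟨e, he, fun x => ⟨?_, ?_⟩⟩
    · exact (hfS true _ _).mp ⟨n + 1, (hmem x).1⟩
    · exact (hfS false _ _).mp ⟨n + 1, (hmem x).2⟩
  refine ⟨f true, f false, ?_⟩
  rw [dense_iff_inter_open]
  rintro U hU ⟨⟨k₁, k₂⟩, hkU⟩
  have hnb : U ∈ nhds (k₁, k₂) := hU.mem_nhds hkU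
  rw [nhds_prod_eq] at hnb
  obtain ⟨U₁, hU₁, U₂, hU₂, hsubU⟩ := Filter.mem_prod_iff.mp hnb
  obtain ⟨I₁, hI₁⟩ := autTop_nhds_mem k₁ U₁ hU₁
  obtain ⟨I₂, hI₂⟩ := autTop_nhds_mem k₂ U₂ hU₂
  -- the finite system to be realized
  set Fs : Finset P := I₁ ∪ I₂ with hFs
  set u₁ : ↥Fs → P := fun x => k₁ ↑x with hu₁
  set u₂ : ↥Fs → P := fun x => k₂ ↑x with hu₂
  have hg1 : RPGoodSys Fs u₁ :=
    ⟨fun a b hab => Subtype.ext (k₁.injective hab), fun a b => k₁.lt_iff_lt.symm⟩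
  have hg2 : RPGoodSys Fs u₂ :=
    ⟨fun a b hab => Subtype.ext (k₂.injective hab), fun a b => k₂.lt_iff_lt.symm⟩
  obtain ⟨e, he, hcomm⟩ := real Fs u₁ u₂ hg1 hg2
  -- extend `e⁻¹` to an automorphism φ of P
  have embB : PosetEmb (fun b : ↥(RPSysB Fs u₁ u₂) => e ↑b) := by
    constructor
    · intro a b hab
      exact Subtype.ext ((he _ a.2 _ b.2).2.mpr hab)
    · intro a b
      rw [← (he _ a.2 _ b.2).1]
      exact Subtype.coe_lt_coe.symm
  have embv : PosetEmb (Subtype.val : ↥(RPSysB Fs u₁ u₂) → P) :=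
    ⟨Subtype.val_injective, fun a b => Subtype.coe_lt_coe.symm⟩
  obtain ⟨φ, hφ⟩ := h2 _ _ _ embB embv
  have hφ' : ∀ b : P, ∀ hb : b ∈ RPSysB Fs u₁ u₂, φ (e b) = b := fun b hb => hφ ⟨b, hb⟩
  have hmemF : ∀ x : P, x ∈ Fs → x ∈ RPSysB Fs u₁ u₂ := by
    intro x hx
    exact Finset.mem_union_left _ (Finset.mem_union_left _ hx)
  have hmemu₁ : ∀ x : ↥Fs, u₁ x ∈ RPSysB Fs u₁ u₂ := by
    intro x
    exact Finset.mem_union_left _ (Finset.mem_union_right _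
      (Finset.mem_image_of_mem _ (Finset.mem_attach _ _)))
  have hmemu₂ : ∀ x : ↥Fs, u₂ x ∈ RPSysB Fs u₁ u₂ := by
    intro x
    exact Finset.mem_union_right _ (Finset.mem_image_of_mem _ (Finset.mem_attach _ _))
  have hconj : ∀ x ∈ Fs, (φ * f true * φ⁻¹) x = k₁ x ∧ (φ * f false * φ⁻¹) x = k₂ x := by
    intro x hx
    have hinv : φ⁻¹ x = e x := by
      have : φ (e x) = x := hφ' x (hmemF x hx)
      calc φ⁻¹ x = φ.symm (φ (e x)) := by rw [this]; rfl
        _ = e x := φ.symm_apply_apply _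
    constructor
    · show φ (f true (φ⁻¹ x)) = k₁ x
      rw [hinv, (hcomm ⟨x, hx⟩).1]
      exact hφ' _ (hmemu₁ ⟨x, hx⟩)
    · show φ (f false (φ⁻¹ x)) = k₂ x
      rw [hinv, (hcomm ⟨x, hx⟩).2]
      exact hφ' _ (hmemu₂ ⟨x, hx⟩)
  refine ⟨(φ * f true * φ⁻¹, φ * f false * φ⁻¹), ?_, ⟨φ, rfl⟩⟩
  apply hsubU
  constructor
  · exact hI₁ _ (fun x hx => (hconj x (Finset.mem_union_left _ hx)).1)
  · exact hI₂ _ (fun x hx => (hconj x (Finset.mem_union_right _ hx)).2)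
end
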